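/- Let n be a positive integer and let p(x) = Σ_{k=0}^{m} a_k x^{2k+1} be an odd polynomial with real coefficients such that 2^{2n²}·(f((1+x)/2^{2n}) − f((1−x)/2^{2n})) = p(x) for all 0 ≤ x ≤ 1. Then for all 0 ≤ x ≤ 1, 2^{2n²+4n+2}·(f((1+x)/2^{2n+2}) − f((1−x)/2^{2n+2})) = 2^{2n²+2n+2}·f(1/2^{2n+1})·x + Σ_{k=0}^{m} (a_k/((k+1)(2k+3)))·x^{2k+3}. -/

import Mathlib

open scoped BigOperators

lemma fab_sub1 (f : ℝ → ℝ) (D x : ℝ) (hD : D ≠ 0) :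
    ∫ s in (0:ℝ)..x, f ((1+s)/D) = D * ∫ t in (1/D)..((1+x)/D), f t := by
  have h : ∀ s:ℝ, (1+s)/D = D⁻¹ * s + D⁻¹ := by intro s; field_simp; ring
  simp only [h]
  rw [intervalIntegral.integral_comp_mul_add f (inv_ne_zero hD) D⁻¹, smul_eq_mul, inv_inv,
    mul_zero, zero_add, show D⁻¹*x+D⁻¹ = (1+x)/D by field_simp; ring, one_div]

lemma fab_sub2 (f : ℝ → ℝ) (D x : ℝ) (hD : D ≠ 0) :
    ∫ s in (0:ℝ)..x, f ((1-s)/D) = D * ∫ t in ((1-x)/D)..(1/D), f t := by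
  have h : ∀ s:ℝ, (1-s)/D = D⁻¹ - D⁻¹ * s := by intro s; field_simp
  simp only [h]
  rw [intervalIntegral.integral_comp_sub_mul f (inv_ne_zero hD) D⁻¹, smul_eq_mul, inv_inv,
    mul_zero, sub_zero, show D⁻¹ - D⁻¹*x = (1-x)/D by field_simp, one_div]

lemma fab_intag (f g : ℝ → ℝ) (hcont : ContinuousOn f (Set.Ici 0)) (hg : Continuous g)
    (x : ℝ) (hx : 0 ≤ x) (h : ∀ s ∈ Set.Icc (0:ℝ) x, 0 ≤ g s) :
    IntervalIntegrable (fun s => f (g s)) MeasureTheory.volume 0 x := by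
  apply ContinuousOn.intervalIntegrable
  apply hcont.comp hg.continuousOn
  intro s hs
  rw [Set.uIcc_of_le hx] at hs
  exact h s hs

lemma fab_keyC (f : ℝ → ℝ)
    (hcont : ContinuousOn f (Set.Ici 0))
    (hint : ∀ x : ℝ, 0 ≤ x → f x = ∫ t in (0:ℝ)..(2 * x), f t)
    (n m : ℕ) (a : ℕ → ℝ)
    (hp : ∀ x : ℝ, 0 ≤ x → x ≤ 1 →
      (2 : ℝ) ^ (2 * n ^ 2) * (f ((1 + x) / 2 ^ (2 * n)) - f ((1 - x) / 2 ^ (2 * n))) =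
        ∑ k ∈ Finset.range (m + 1), a k * x ^ (2 * k + 1))
    (s : ℝ) (hs0 : 0 ≤ s) (hs1 : s ≤ 1) :
    f ((1+s)/2^(2*n+1)) + f ((1-s)/2^(2*n+1)) =
      2 * f (1/2^(2*n+1)) + ((2:ℝ)^(2*n))⁻¹ * ((2:ℝ)^(2*n^2))⁻¹ *
        ∑ k ∈ Finset.range (m+1), a k / (2*(k:ℝ)+2) * s^(2*k+2) := by
  have hU : (0:ℝ) < 2^(2*n) := by positivity
  have hII : ∀ p q : ℝ, 0 ≤ p → 0 ≤ q → IntervalIntegrable f MeasureTheory.volume p q := by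
    intro p q hpp hq
    exact (hcont.mono (fun t ht => (le_inf hpp hq).trans ht.1)).intervalIntegrable
  -- apply the integral equation
  have e1 : f ((1+s)/2^(2*n+1)) = ∫ t in (0:ℝ)..((1+s)/2^(2*n)), f t := by
    rw [hint _ (by positivity)]
    norm_num [pow_succ]
    ring_nf
  have e2 : f ((1-s)/2^(2*n+1)) = ∫ t in (0:ℝ)..((1-s)/2^(2*n)), f t := by
    have hnn : (0:ℝ) ≤ (1-s)/2^(2*n+1) := div_nonneg (by linarith) (by positivity)
    rw [hint _ hnn]
    norm_num [pow_succ]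
    ring_nf
  have e0 : f (1/2^(2*n+1)) = ∫ t in (0:ℝ)..(1/2^(2*n)), f t := by
    rw [hint _ (by positivity)]
    norm_num [pow_succ]
    ring_nf
  have hu1 : (0:ℝ) ≤ 1/2^(2*n) := by positivity
  have s1 : (∫ t in (0:ℝ)..((1+s)/2^(2*n)), f t)
      = (∫ t in (0:ℝ)..(1/2^(2*n):ℝ), f t) + ∫ t in (1/2^(2*n):ℝ)..((1+s)/2^(2*n)), f t :=
    (intervalIntegral.integral_add_adjacent_intervals (hII _ _ le_rfl hu1)
      (hII _ _ hu1 (by positivity))).symm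
  have s2 : (∫ t in (0:ℝ)..((1-s)/2^(2*n)), f t)
      = (∫ t in (0:ℝ)..(1/2^(2*n):ℝ), f t) - ∫ t in ((1-s)/2^(2*n):ℝ)..(1/2^(2*n)), f t := by
    have hnn : (0:ℝ) ≤ (1-s)/2^(2*n) := div_nonneg (by linarith) (by positivity)
    have h := intervalIntegral.integral_add_adjacent_intervals
      (hII _ _ le_rfl hnn) (hII _ _ hnn hu1)
    linarith [h]
  have t1 : (∫ t in (1/2^(2*n):ℝ)..((1+s)/2^(2*n)), f t)
      = ((2:ℝ)^(2*n))⁻¹ * ∫ r in (0:ℝ)..s, f ((1+r)/2^(2*n)) := by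
    rw [fab_sub1 f (2^(2*n)) s hU.ne', ← mul_assoc, inv_mul_cancel₀ hU.ne', one_mul]
  have t2 : (∫ t in ((1-s)/2^(2*n):ℝ)..(1/2^(2*n)), f t)
      = ((2:ℝ)^(2*n))⁻¹ * ∫ r in (0:ℝ)..s, f ((1-r)/2^(2*n)) := by
    rw [fab_sub2 f (2^(2*n)) s hU.ne', ← mul_assoc, inv_mul_cancel₀ hU.ne', one_mul]
  have i1 : IntervalIntegrable (fun r => f ((1+r)/2^(2*n))) MeasureTheory.volume 0 s :=
    fab_intag f _ hcont (by fun_prop) s hs0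
      (fun r hr => div_nonneg (by linarith [hr.1]) (by positivity))
  have i2 : IntervalIntegrable (fun r => f ((1-r)/2^(2*n))) MeasureTheory.volume 0 s :=
    fab_intag f _ hcont (by fun_prop) s hs0
      (fun r hr => div_nonneg (by linarith [hr.2]) (by positivity))
  have comb : (∫ r in (0:ℝ)..s, f ((1+r)/2^(2*n))) - ∫ r in (0:ℝ)..s, f ((1-r)/2^(2*n))
      = ((2:ℝ)^(2*n^2))⁻¹ * ∑ k ∈ Finset.range (m+1), a k / (2*(k:ℝ)+2) * s^(2*k+2) := by
    rw [← intervalIntegral.integral_sub i1 i2]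
    rw [intervalIntegral.integral_congr
      (g := fun r => ((2:ℝ)^(2*n^2))⁻¹ * ∑ k ∈ Finset.range (m+1), a k * r^(2*k+1)) ?_]
    · rw [intervalIntegral.integral_const_mul]
      congr 1
      rw [intervalIntegral.integral_finset_sum
        (fun k _ => (Continuous.intervalIntegrable (by fun_prop) _ _))]
      refine Finset.sum_congr rfl fun k _ => ?_
      rw [intervalIntegral.integral_const_mul, integral_pow]
      norm_num
      push_cast
      ring
    · intro r hr
      rw [Set.uIcc_of_le hs0] at hr
      have h := hp r hr.1 (hr.2.trans hs1)
      have hv : ((2:ℝ)^(2*n^2)) ≠ 0 := by positivity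
      dsimp only
      rw [← h, ← mul_assoc, inv_mul_cancel₀ hv, one_mul]
  rw [e1, e2, e0, s1, s2, t1, t2]
  linear_combination ((2:ℝ)^(2*n))⁻¹ * comb

theorem fabius_stmt_11 (f : ℝ → ℝ)
    (hcont : ContinuousOn f (Set.Ici 0))
    (hsym : ∀ x : ℝ, 0 ≤ x → x ≤ 1 → f x + f (1 - x) = 1)
    (hint : ∀ x : ℝ, 0 ≤ x → f x = ∫ t in (0:ℝ)..(2 * x), f t)
    (n m : ℕ) (hn : 0 < n) (a : ℕ → ℝ)
    (hp : ∀ x : ℝ, 0 ≤ x → x ≤ 1 →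
      (2 : ℝ) ^ (2 * n ^ 2) * (f ((1 + x) / 2 ^ (2 * n)) - f ((1 - x) / 2 ^ (2 * n))) =
        ∑ k ∈ Finset.range (m + 1), a k * x ^ (2 * k + 1)) :
    ∀ x : ℝ, 0 ≤ x → x ≤ 1 →
      (2 : ℝ) ^ (2 * n ^ 2 + 4 * n + 2) * (f ((1 + x) / 2 ^ (2 * n + 2)) - f ((1 - x) / 2 ^ (2 * n + 2))) =
        (2 : ℝ) ^ (2 * n ^ 2 + 2 * n + 2) * f (1 / 2 ^ (2 * n + 1)) * x +
          ∑ k ∈ Finset.range (m + 1), (a k / (((k : ℝ) + 1) * (2 * (k : ℝ) + 3))) * x ^ (2 * k + 3) := by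
  intro x hx0 hx1
  have hP : (0:ℝ) < 2^(2*n+1) := by positivity
  have hU : (0:ℝ) < 2^(2*n) := by positivity
  have hV : (0:ℝ) < 2^(2*n^2) := by positivity
  have hII : ∀ p q : ℝ, 0 ≤ p → 0 ≤ q → IntervalIntegrable f MeasureTheory.volume p q := by
    intro p q hpp hq
    exact (hcont.mono (fun t ht => (le_inf hpp hq).trans ht.1)).intervalIntegrable
  have hnn : (0:ℝ) ≤ (1-x)/2^(2*n+1) := div_nonneg (by linarith) (by positivity)
  have e1 : f ((1+x)/2^(2*n+2)) = ∫ t in (0:ℝ)..((1+x)/2^(2*n+1)), f t := by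
    rw [hint _ (by positivity)]
    norm_num [pow_succ]
    ring_nf
  have e2 : f ((1-x)/2^(2*n+2)) = ∫ t in (0:ℝ)..((1-x)/2^(2*n+1)), f t := by
    have hnn2 : (0:ℝ) ≤ (1-x)/2^(2*n+2) := div_nonneg (by linarith) (by positivity)
    rw [hint _ hnn2]
    norm_num [pow_succ]
    ring_nf
  have diff : f ((1+x)/2^(2*n+2)) - f ((1-x)/2^(2*n+2))
      = ∫ t in ((1-x)/2^(2*n+1):ℝ)..((1+x)/2^(2*n+1)), f t := by
    rw [e1, e2]
    exact intervalIntegral.integral_interval_sub_left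
      (hII _ _ le_rfl (by positivity)) (hII _ _ le_rfl hnn)
  have split : (∫ t in ((1-x)/2^(2*n+1):ℝ)..((1+x)/2^(2*n+1)), f t)
      = (∫ t in ((1-x)/2^(2*n+1):ℝ)..(1/2^(2*n+1):ℝ), f t)
        + ∫ t in (1/2^(2*n+1):ℝ)..((1+x)/2^(2*n+1)), f t :=
    (intervalIntegral.integral_add_adjacent_intervals
      (hII _ _ hnn (by positivity)) (hII _ _ (by positivity) (by positivity))).symm
  have t1 : (∫ s in (0:ℝ)..x, f ((1+s)/2^(2*n+1)))
      = 2^(2*n+1) * ∫ t in (1/2^(2*n+1):ℝ)..((1+x)/2^(2*n+1)), f t :=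
    fab_sub1 f (2^(2*n+1)) x hP.ne'
  have t2 : (∫ s in (0:ℝ)..x, f ((1-s)/2^(2*n+1)))
      = 2^(2*n+1) * ∫ t in ((1-x)/2^(2*n+1):ℝ)..(1/2^(2*n+1):ℝ), f t :=
    fab_sub2 f (2^(2*n+1)) x hP.ne'
  have i1 : IntervalIntegrable (fun s => f ((1+s)/2^(2*n+1))) MeasureTheory.volume 0 x :=
    fab_intag f _ hcont (by fun_prop) x hx0
      (fun s hs => div_nonneg (by linarith [hs.1]) (by positivity))
  have i2 : IntervalIntegrable (fun s => f ((1-s)/2^(2*n+1))) MeasureTheory.volume 0 x :=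
    fab_intag f _ hcont (by fun_prop) x hx0
      (fun s hs => div_nonneg (by linarith [hs.2]) (by positivity))
  have ipol : (∫ s in (0:ℝ)..x, (∑ k ∈ Finset.range (m+1), a k / (2*(k:ℝ)+2) * s^(2*k+2)))
      = ∑ k ∈ Finset.range (m+1), a k / ((2*(k:ℝ)+2)*(2*(k:ℝ)+3)) * x^(2*k+3) := by
    rw [intervalIntegral.integral_finset_sum
      (fun k _ => (Continuous.intervalIntegrable (by fun_prop) _ _))]
    refine Finset.sum_congr rfl fun k _ => ?_
    rw [intervalIntegral.integral_const_mul, integral_pow]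
    have h1 : (2*(k:ℝ)+2) ≠ 0 := by positivity
    have h2 : (2*(k:ℝ)+3) ≠ 0 := by positivity
    rw [zero_pow (by omega : 2*k+2+1 ≠ 0), sub_zero]
    push_cast
    simp only [div_eq_mul_inv, mul_inv]
    ring
  have addint : (∫ s in (0:ℝ)..x, f ((1+s)/2^(2*n+1))) + ∫ s in (0:ℝ)..x, f ((1-s)/2^(2*n+1))
      = 2 * f (1/2^(2*n+1)) * x + ((2:ℝ)^(2*n))⁻¹ * ((2:ℝ)^(2*n^2))⁻¹ *
          ∑ k ∈ Finset.range (m+1), a k / ((2*(k:ℝ)+2)*(2*(k:ℝ)+3)) * x^(2*k+3) := by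
    rw [← intervalIntegral.integral_add i1 i2]
    rw [intervalIntegral.integral_congr
      (g := fun s => 2 * f (1/2^(2*n+1)) + ((2:ℝ)^(2*n))⁻¹ * ((2:ℝ)^(2*n^2))⁻¹ *
        ∑ k ∈ Finset.range (m+1), a k / (2*(k:ℝ)+2) * s^(2*k+2))
      (fun s hs => by
        rw [Set.uIcc_of_le hx0] at hs
        exact fab_keyC f hcont hint n m a hp s hs.1 (hs.2.trans hx1))]
    rw [intervalIntegral.integral_add (intervalIntegrable_const)
      ((Continuous.intervalIntegrable (by fun_prop) _ _)),
      intervalIntegral.integral_const, intervalIntegral.integral_const_mul, ipol,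
      smul_eq_mul]
    ring
  -- final assembly
  rw [diff, split]
  have hsum2 : (∑ k ∈ Finset.range (m+1), a k / (((k:ℝ)+1)*(2*(k:ℝ)+3)) * x^(2*k+3))
      = 2 * ∑ k ∈ Finset.range (m+1), a k / ((2*(k:ℝ)+2)*(2*(k:ℝ)+3)) * x^(2*k+3) := by
    rw [Finset.mul_sum]
    refine Finset.sum_congr rfl fun k _ => ?_
    have h1 : ((k:ℝ)+1) ≠ 0 := by positivity
    have h2 : (2*(k:ℝ)+3) ≠ 0 := by positivity
    field_simp
  rw [hsum2]
  have addint2 : (2:ℝ)^(2*n) * (2:ℝ)^(2*n^2) *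
      ((∫ s in (0:ℝ)..x, f ((1+s)/2^(2*n+1))) + ∫ s in (0:ℝ)..x, f ((1-s)/2^(2*n+1)))
      = (2:ℝ)^(2*n) * (2:ℝ)^(2*n^2) * (2 * f (1/2^(2*n+1)) * x)
        + ∑ k ∈ Finset.range (m+1), a k / ((2*(k:ℝ)+2)*(2*(k:ℝ)+3)) * x^(2*k+3) := by
    rw [addint]
    field_simp
  have hA : (2:ℝ)^(2*n^2+4*n+2) = 2^(2*n+1) * (2^(2*n) * (2^(2*n^2) * 2)) := by
    rw [← pow_succ, ← pow_add, ← pow_add]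
    congr 1
    ring
  have hB : (2:ℝ)^(2*n^2+2*n+2) = 2^(2*n) * (2^(2*n^2) * 4) := by
    rw [show (4:ℝ) = 2^2 by norm_num, ← pow_add, ← pow_add]
    congr 1
    ring
  rw [hA, hB]
  linear_combination 2*addint2 - 2*((2:ℝ)^(2*n) * (2:ℝ)^(2*n^2))*t1
    - 2*((2:ℝ)^(2*n) * (2:ℝ)^(2*n^2))*t2
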